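/- arXiv:2105.01880 — 3 statements merged into one kernel-verified Lean document; each statement's English description precedes it below -/
import Mathlib

section
/- For all n ≥ 1, the harmonic numbers hₙ := H_{2n+1} = ∑_{j=1}^{2n+1} 1/j satisfy the recurrence (n+1)(2n+3)(4n+1) · h_{n+1} = (4n+3)(4n²+6n+1) · hₙ − n(2n+1)(4n+5) · h_{n−1}. -/
/-- The `m`-th harmonic number `H_m = ∑_{j=1}^m 1/j`. -/
def harmonicNum (m : ℕ) : ℚ := ∑ j ∈ Finset.range m, 1 / ((j : ℚ) + 1)

lemma harmonicNum_succ (k : ℕ) :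
    harmonicNum (k + 1) = harmonicNum k + 1 / ((k : ℚ) + 1) := by
  simp [harmonicNum, Finset.sum_range_succ]

theorem odd_harmonic_recurrence (n : ℕ) (hn : 1 ≤ n) :
    ((n : ℚ) + 1) * (2 * (n : ℚ) + 3) * (4 * (n : ℚ) + 1) * harmonicNum (2 * (n + 1) + 1)
      = (4 * (n : ℚ) + 3) * (4 * (n : ℚ) ^ 2 + 6 * (n : ℚ) + 1) * harmonicNum (2 * n + 1)
        - (n : ℚ) * (2 * (n : ℚ) + 1) * (4 * (n : ℚ) + 5) * harmonicNum (2 * (n - 1) + 1) := by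
  obtain ⟨m, rfl⟩ := Nat.exists_eq_add_of_le hn
  have e1 : 2 * (1 + m + 1) + 1 = (2 * m + 4) + 1 := by ring
  have e2 : 2 * (1 + m) + 1 = (2 * m + 2) + 1 := by ring
  have e3 : 2 * (1 + m - 1) + 1 = (2 * m) + 1 := by omega
  rw [e1, e2, e3, harmonicNum_succ, harmonicNum_succ, harmonicNum_succ,
    harmonicNum_succ, harmonicNum_succ]
  push_cast
  have hm : (0:ℚ) < (m : ℚ) + 1 := by positivity
  have h1 : ((m:ℚ) * 2 + 1) ≠ 0 := by positivity
  have h2 : ((m:ℚ) * 2 + 2) ≠ 0 := by positivity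
  have h3 : ((m:ℚ) * 2 + 3) ≠ 0 := by positivity
  have h4 : ((m:ℚ) * 2 + 4) ≠ 0 := by positivity
  have h5 : ((m:ℚ) * 2 + 5) ≠ 0 := by positivity
  field_simp
  ring
end

section
/- Let M be an n×n matrix over a commutative ring with n even, and suppose M_{i,j} = 0 whenever i+j is even. Then det(M) = (−1)^{n/2} · det(M_{2i+1,2j})_{0≤i,j≤n/2−1} · det(M_{2i,2j+1})_{0≤i,j≤n/2−1}. -/
open Equiv Finset

lemma swap_inl_inr_comm {α : Type*} [DecidableEq α] [Fintype α] :
    ((Finset.univ : Finset α) : Set α).Pairwise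
      (Function.onFun Commute fun i => Equiv.swap (Sum.inl i : α ⊕ α) (Sum.inr i)) := by
  intro a _ b _ hab
  apply Equiv.Perm.Disjoint.commute
  intro x
  rcases x with x | x <;>
  · by_cases h : x = a
    · subst h
      right
      rw [Equiv.swap_apply_of_ne_of_ne] <;> simp [hab]
    · left
      rw [Equiv.swap_apply_of_ne_of_ne] <;> simp [h]

lemma noncommProd_swap_apply {α : Type*} [DecidableEq α] [Fintype α] (s : Finset α)
    (comm : (s : Set α).Pairwise
      (Function.onFun Commute fun i => Equiv.swap (Sum.inl i : α ⊕ α) (Sum.inr i))) :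
    ∀ x : α,
      (s.noncommProd (fun i => Equiv.swap (Sum.inl i : α ⊕ α) (Sum.inr i)) comm) (Sum.inl x)
        = (if x ∈ s then Sum.inr x else Sum.inl x) ∧
      (s.noncommProd (fun i => Equiv.swap (Sum.inl i : α ⊕ α) (Sum.inr i)) comm) (Sum.inr x)
        = (if x ∈ s then Sum.inl x else Sum.inr x) := by
  classical
  induction s using Finset.induction with
  | empty => simp
  | @insert a s ha ih =>
    intro x
    rw [Finset.noncommProd_insert_of_notMem _ _ _ _ ha]
    have comm' : (s : Set α).Pairwise
        (Function.onFun Commute fun i => Equiv.swap (Sum.inl i : α ⊕ α) (Sum.inr i)) := fun p hp q hq =>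
      comm (Finset.mem_insert_of_mem hp) (Finset.mem_insert_of_mem hq)
    obtain ⟨h1, h2⟩ := ih comm' x
    by_cases hx : x = a
    · subst hx
      have hxs : x ∉ s := ha
      simp only [Equiv.Perm.mul_apply, h1, h2, if_neg hxs, Finset.mem_insert, true_or, if_pos]
      constructor <;> simp [Equiv.swap_apply_left, Equiv.swap_apply_right]
    · simp only [Equiv.Perm.mul_apply, h1, h2, Finset.mem_insert]
      by_cases hxs : x ∈ s <;>
        simp [hxs, hx, Equiv.swap_apply_of_ne_of_ne, Sum.inl.injEq, Sum.inr.injEq]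

lemma sumComm_eq_noncommProd {α : Type*} [DecidableEq α] [Fintype α] :
    (Equiv.sumComm α α : Equiv.Perm (α ⊕ α))
      = Finset.univ.noncommProd (fun i => Equiv.swap (Sum.inl i : α ⊕ α) (Sum.inr i))
          swap_inl_inr_comm := by
  ext x
  rcases x with x | x
  · rw [(noncommProd_swap_apply Finset.univ swap_inl_inr_comm x).1]
    simp
  · rw [(noncommProd_swap_apply Finset.univ swap_inl_inr_comm x).2]
    simp

lemma sign_sumComm {α : Type*} [DecidableEq α] [Fintype α] :
    Equiv.Perm.sign (Equiv.sumComm α α : Equiv.Perm (α ⊕ α)) = (-1) ^ Fintype.card α := by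
  rw [sumComm_eq_noncommProd]
  rw [Finset.map_noncommProd _ _ swap_inl_inr_comm (Equiv.Perm.sign)]
  rw [Finset.noncommProd_eq_prod]
  rw [Finset.prod_congr rfl (fun i _ => Equiv.Perm.sign_swap (by simp))]
  rw [Finset.prod_const, Finset.card_univ]

theorem checkerboard_det_even_vanish_even_dim {R : Type*} [CommRing R] (n : ℕ)
    (hn : Even n) (M : Matrix (Fin n) (Fin n) R)
    (hM : ∀ i j : Fin n, Even (i.1 + j.1) → M i j = 0) :
    M.det
      = (-1 : R) ^ (n / 2)
      * Matrix.det (Matrix.of fun i j : Fin (n / 2) =>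
          M ⟨2 * i.1 + 1, by have := i.2; omega⟩ ⟨2 * j.1, by have := j.2; omega⟩)
      * Matrix.det (Matrix.of fun i j : Fin (n / 2) =>
          M ⟨2 * i.1, by have := i.2; omega⟩ ⟨2 * j.1 + 1, by have := j.2; omega⟩) := by
  classical
  set m := n / 2 with hm
  have hn2 : n = 2 * m := by obtain ⟨k, hk⟩ := hn; omega
  -- the interleaving equiv
  have hcard : Fintype.card (Fin m ⊕ Fin m) = Fintype.card (Fin n) := by simp; omega
  let cf : Fin m ⊕ Fin m → Fin n := fun x =>
    Sum.elim (fun j => (⟨2 * j.1, by omega⟩ : Fin n)) (fun j => ⟨2 * j.1 + 1, by omega⟩) x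
  have hinj : Function.Injective cf := by
    rintro (a | a) (b | b) h <;> simp only [cf, Sum.elim_inl, Sum.elim_inr, Fin.mk.injEq] at h <;>
      first
      | (congr 1; exact Fin.ext (by omega))
      | omega
  let c : Fin m ⊕ Fin m ≃ Fin n :=
    Equiv.ofBijective cf ((Fintype.bijective_iff_injective_and_card cf).2 ⟨hinj, hcard⟩)
  set A := (Matrix.of fun i j : Fin m =>
      M ⟨2 * i.1 + 1, by omega⟩ ⟨2 * j.1, by omega⟩) with hA
  set B := (Matrix.of fun i j : Fin m =>
      M ⟨2 * i.1, by omega⟩ ⟨2 * j.1 + 1, by omega⟩) with hB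
  have key : M.submatrix c c = (Matrix.fromBlocks A 0 0 B).submatrix
      (Equiv.sumComm (Fin m) (Fin m)) id := by
    ext x y
    rcases x with i | i <;> rcases y with j | j <;>
      simp only [Matrix.submatrix_apply, Equiv.sumComm_apply, Sum.swap_inl, Sum.swap_inr, id_eq,
        Matrix.fromBlocks_apply₁₁, Matrix.fromBlocks_apply₁₂, Matrix.fromBlocks_apply₂₁,
        Matrix.fromBlocks_apply₂₂, Matrix.zero_apply, Equiv.ofBijective_apply, c, cf,
        Sum.elim_inl, Sum.elim_inr, hA, hB, Matrix.of_apply]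
    · exact hM _ _ ⟨i.1 + j.1, by simp only [Fin.val_mk]; omega⟩
    · exact hM _ _ ⟨i.1 + j.1 + 1, by simp only [Fin.val_mk]; omega⟩
  have h1 : M.det = (M.submatrix c c).det := (Matrix.det_submatrix_equiv_self c M).symm
  rw [h1, key, Matrix.det_permute, Matrix.det_fromBlocks_zero₂₁, sign_sumComm]
  simp only [Fintype.card_fin]
  push_cast
  ring
end

section
/- Let (cₖ) be a sequence in a commutative ring, x an element, and define cₖ(x) := ∑_{j=0}^k binom(k,j) · cⱼ · x^{k−j}. Then for all n ≥ 0, the Hankel determinants satisfy Hₙ(cₖ(x)) = Hₙ(cₖ). -/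
/-- The Hankel determinant `Hₙ(c) = det (c_{i+j})_{0 ≤ i,j ≤ n}`. -/
def hankel {R : Type*} [CommRing R] (c : ℕ → R) (n : ℕ) : R :=
  Matrix.det (Matrix.of fun i j : Fin (n + 1) => c (i.1 + j.1))

open Finset in
lemma hankel_key {R : Type*} [CommRing R] (c : ℕ → R) (x : R) (n i j : ℕ)
    (hi : i ≤ n) (hj : j ≤ n) :
    ∑ m ∈ range (i + j + 1), ((i + j).choose m : R) * c m * x ^ (i + j - m)
      = ∑ k ∈ range (n + 1), ∑ l ∈ range (n + 1),
          ((i.choose k : R) * x ^ (i - k)) * c (k + l) * ((j.choose l : R) * x ^ (j - l)) := by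
  set F : Finset (ℕ × ℕ) :=
    (range (i + j + 1) ×ˢ range (i + j + 1)).filter (fun pq => pq.1 + pq.2 ≤ i + j) with hF
  set g : ℕ × ℕ → R := fun pq =>
    ((i.choose pq.1 : R) * (j.choose pq.2 : R)) * c (pq.1 + pq.2) * x ^ (i + j - (pq.1 + pq.2))
    with hg
  have hRHS : ∑ k ∈ range (n + 1), ∑ l ∈ range (n + 1),
      ((i.choose k : R) * x ^ (i - k)) * c (k + l) * ((j.choose l : R) * x ^ (j - l))
      = ∑ p ∈ F, g p := by
    rw [← Finset.sum_product']
    have h1 : ∑ p ∈ range (n + 1) ×ˢ range (n + 1),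
        ((i.choose p.1 : R) * x ^ (i - p.1)) * c (p.1 + p.2) * ((j.choose p.2 : R) * x ^ (j - p.2))
        = ∑ p ∈ range (i + 1) ×ˢ range (j + 1),
            ((i.choose p.1 : R) * x ^ (i - p.1)) * c (p.1 + p.2)
              * ((j.choose p.2 : R) * x ^ (j - p.2)) := by
      refine (Finset.sum_subset ?_ ?_).symm
      · intro p hp
        simp only [Finset.mem_product, Finset.mem_range] at hp ⊢
        omega
      · intro p hp hp'
        simp only [Finset.mem_product, Finset.mem_range] at hp hp'
        rcases Nat.lt_or_ge i p.1 with h | h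
        · rw [Nat.choose_eq_zero_of_lt h]; push_cast; ring
        · rw [Nat.choose_eq_zero_of_lt (by omega : j < p.2)]; push_cast; ring
    have h2 : ∑ p ∈ range (i + 1) ×ˢ range (j + 1),
        ((i.choose p.1 : R) * x ^ (i - p.1)) * c (p.1 + p.2) * ((j.choose p.2 : R) * x ^ (j - p.2))
        = ∑ p ∈ range (i + 1) ×ˢ range (j + 1), g p := by
      refine Finset.sum_congr rfl fun p hp => ?_
      simp only [Finset.mem_product, Finset.mem_range] at hp
      simp only [hg]
      have h : i + j - (p.1 + p.2) = (i - p.1) + (j - p.2) := by omega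
      rw [h, pow_add]; ring
    have h3 : ∑ p ∈ range (i + 1) ×ˢ range (j + 1), g p = ∑ p ∈ F, g p := by
      refine Finset.sum_subset ?_ ?_
      · intro p hp
        simp only [Finset.mem_product, Finset.mem_range] at hp
        simp only [hF, Finset.mem_filter, Finset.mem_product, Finset.mem_range]
        omega
      · intro p hp hp'
        simp only [hF, Finset.mem_filter, Finset.mem_product, Finset.mem_range] at hp
        simp only [Finset.mem_product, Finset.mem_range] at hp'
        simp only [hg]
        rcases Nat.lt_or_ge i p.1 with h | h
        · rw [Nat.choose_eq_zero_of_lt h]; push_cast; ring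
        · rw [Nat.choose_eq_zero_of_lt (by omega : j < p.2)]; push_cast; ring
    rw [h1, h2, h3]
  rw [hRHS]
  -- expand LHS via Vandermonde
  have hL : ∀ m ∈ range (i + j + 1),
      ((i + j).choose m : R) * c m * x ^ (i + j - m)
        = ∑ pq ∈ Finset.HasAntidiagonal.antidiagonal m,
            ((i.choose pq.1 : R) * (j.choose pq.2 : R)) * c m * x ^ (i + j - m) := by
    intro m _
    rw [Nat.add_choose_eq, Nat.cast_sum, Finset.sum_mul, Finset.sum_mul]
    exact Finset.sum_congr rfl fun pq _ => by push_cast; ring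
  rw [Finset.sum_congr rfl hL, Finset.sum_sigma']
  refine Finset.sum_nbij' (fun s => s.2) (fun p => (⟨p.1 + p.2, p⟩ : Σ _ : ℕ, ℕ × ℕ))
    ?_ ?_ ?_ ?_ ?_
  · intro s hs
    simp only [Finset.mem_sigma, Finset.mem_range, Finset.HasAntidiagonal.mem_antidiagonal] at hs
    simp only [hF, Finset.mem_filter, Finset.mem_product, Finset.mem_range]
    omega
  · intro p hp
    simp only [hF, Finset.mem_filter, Finset.mem_product, Finset.mem_range] at hp
    rw [Finset.mem_sigma]
    refine ⟨?_, ?_⟩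
    · simp only [Finset.mem_range]; omega
    · simp [Finset.HasAntidiagonal.mem_antidiagonal]
  · intro s hs
    simp only [Finset.mem_sigma, Finset.mem_range, Finset.HasAntidiagonal.mem_antidiagonal] at hs
    exact Sigma.ext hs.2 (heq_of_eq rfl)
  · intro p _; rfl
  · intro s hs
    simp only [Finset.mem_sigma, Finset.mem_range, Finset.HasAntidiagonal.mem_antidiagonal] at hs
    simp only [hg, hs.2]

theorem hankel_binomial_transform {R : Type*} [CommRing R] (c : ℕ → R) (x : R) (n : ℕ) :
    hankel (fun k => ∑ j ∈ Finset.range (k + 1), (k.choose j : R) * c j * x ^ (k - j)) n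
      = hankel c n := by
  set P : Matrix (Fin (n + 1)) (Fin (n + 1)) R :=
    Matrix.of fun i k => (i.1.choose k.1 : R) * x ^ (i.1 - k.1) with hP
  have hmat : (Matrix.of fun i j : Fin (n + 1) =>
      ∑ m ∈ Finset.range (i.1 + j.1 + 1), ((i.1 + j.1).choose m : R) * c m * x ^ (i.1 + j.1 - m))
      = P * (Matrix.of fun i j : Fin (n + 1) => c (i.1 + j.1)) * P.transpose := by
    ext i j
    rw [Matrix.mul_apply]
    simp only [Matrix.mul_apply, Matrix.transpose_apply, hP, Matrix.of_apply]
    rw [hankel_key c x n i.1 j.1 (Nat.lt_succ_iff.mp i.2) (Nat.lt_succ_iff.mp j.2)]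
    rw [Finset.sum_comm]
    rw [← Fin.sum_univ_eq_sum_range
      (fun l => ∑ k ∈ Finset.range (n + 1),
        ((i.1.choose k : R) * x ^ (i.1 - k)) * c (k + l) * ((j.1.choose l : R) * x ^ (j.1 - l))) (n+1)]
    refine Finset.sum_congr rfl fun l _ => ?_
    rw [Finset.sum_mul]
    rw [← Fin.sum_univ_eq_sum_range
      (fun k => ((i.1.choose k : R) * x ^ (i.1 - k)) * c (k + l.1) * ((j.1.choose l.1 : R) * x ^ (j.1 - l.1))) (n+1)]
  have hdetP : P.det = 1 := by
    rw [Matrix.det_of_lowerTriangular P]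
    · refine Finset.prod_eq_one fun i _ => ?_
      simp [hP]
    · intro i j hij
      have : i.1 < j.1 := hij
      simp [hP, Nat.choose_eq_zero_of_lt this]
  unfold hankel
  rw [hmat, Matrix.det_mul, Matrix.det_mul, Matrix.det_transpose, hdetP]
  ring
end
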